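/- Let G = (V,E) be a finite simple graph, let O be an orientation of G, and let O' be the orientation obtained from O by reversing the direction of every edge of an O-directed cycle, or of every edge of an O-directed cocycle. Then for every edge e of G, e lies in some O-directed cycle if and only if e lies in some O'-directed cycle (equivalently, the cyclic part and the acyclic part of the orientation are unchanged by cycle-flips and cocycle-flips). -/

import Mathlib

/-- An orientation of a simple graph: a choice of direction for each edge. -/
structure GraphOrientation {V : Type*} (G : SimpleGraph V) where
  dir : V → V → Prop
  adj_of_dir : ∀ u v, dir u v → G.Adj u v
  dir_iff_not : ∀ u v, G.Adj u v → (dir u v ↔ ¬ dir v u)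

namespace GraphOrientation

variable {V : Type*} {G : SimpleGraph V}

/-- The outdegree of a vertex: the number of edges directed away from it. -/
noncomputable def outDegree (O : GraphOrientation G) (v : V) : ℕ :=
  {u | O.dir v u}.ncard

/-- `v` is reachable from `u` by a directed path. -/
def Reaches (O : GraphOrientation G) : V → V → Prop :=
  Relation.ReflTransGen O.dir

/-- `C` is the edge set of a directed cycle of the orientation. -/
def IsDirCycle (O : GraphOrientation G) (C : Set (Sym2 V)) : Prop :=
  ∃ (v : V) (w : G.Walk v v), w.IsCycle ∧
    (∀ d ∈ w.darts, O.dir d.toProd.1 d.toProd.2) ∧ C = {e | e ∈ w.edges}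

/-- The orientation is strongly connected. -/
def IsStronglyConnected (O : GraphOrientation G) : Prop := ∀ u v, O.Reaches u v

/-- Every vertex is reachable from `v0`. -/
def IsConnectedFrom (O : GraphOrientation G) (v0 : V) : Prop := ∀ v, O.Reaches v0 v

/-- The set of edges on which two orientations differ. -/
def diffSet (O O' : GraphOrientation G) : Set (Sym2 V) :=
  {e | ∃ a b, e = s(a, b) ∧ O.dir a b ∧ O'.dir b a}

/-- `O'` is obtained from `O` by reversing exactly the edges of `A`. -/
def IsFlipOn (O O' : GraphOrientation G) (A : Set (Sym2 V)) : Prop :=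
  (∀ u v, s(u, v) ∈ A → (O'.dir u v ↔ O.dir v u)) ∧
    (∀ u v, s(u, v) ∉ A → (O'.dir u v ↔ O.dir u v))

/-- One cycle-flip step. -/
def CycleFlip (O O' : GraphOrientation G) : Prop :=
  ∃ C, O.IsDirCycle C ∧ O.IsFlipOn O' C

end GraphOrientation

/-- The cut defined by a vertex subset `U`: edges with exactly one endpoint in `U`. -/
def SimpleGraph.cutSet {V : Type*} (G : SimpleGraph V) (U : Set V) : Set (Sym2 V) :=
  {e | ∃ a b, e = s(a, b) ∧ G.Adj a b ∧ a ∈ U ∧ b ∉ U}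

/-- A cocycle: a minimal nonempty cut. -/
def SimpleGraph.IsCocycle {V : Type*} (G : SimpleGraph V) (D : Set (Sym2 V)) : Prop :=
  D.Nonempty ∧ (∃ U : Set V, D = G.cutSet U) ∧
    ∀ D' : Set (Sym2 V), D'.Nonempty → (∃ U : Set V, D' = G.cutSet U) → D' ⊆ D → D' = D

/-- A directed cocycle: a cocycle all of whose edges are directed toward the same side. -/
def GraphOrientation.IsDirCocycle {V : Type*} {G : SimpleGraph V}
    (O : GraphOrientation G) (D : Set (Sym2 V)) : Prop :=
  G.IsCocycle D ∧ ∃ U : Set V, D = G.cutSet U ∧ ∀ a b, O.dir a b → s(a, b) ∈ D → b ∈ U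

/-- The excess of a subset of vertices with respect to `δ : V → ℕ`. -/
noncomputable def SimpleGraph.excess {V : Type*} (G : SimpleGraph V) (δ : V → ℕ)
    (U : Finset V) : ℤ :=
  (∑ u ∈ U, (δ u : ℤ)) - ({e | e ∈ G.edgeSet ∧ ∀ x ∈ e, x ∈ U} : Set (Sym2 V)).ncard

/-- `C` is the edge set of a cycle of `G`. -/
def SimpleGraph.IsCycleEdgeSet {V : Type*} (G : SimpleGraph V) (C : Set (Sym2 V)) : Prop :=
  ∃ (v : V) (w : G.Walk v v), w.IsCycle ∧ C = {e | e ∈ w.edges}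

/-- The number of connected components of the spanning subgraph `(V, S)`. -/
noncomputable def numComponents (V : Type*) (S : Set (Sym2 V)) : ℕ :=
  Nat.card (SimpleGraph.fromEdgeSet S).ConnectedComponent



namespace GraphOrientation

variable {V : Type*} {G : SimpleGraph V}

open SimpleGraph

lemma reaches_of_dirWalk (O : GraphOrientation G) {u v : V} (w : G.Walk u v)
    (hd : ∀ d ∈ w.darts, O.dir d.toProd.1 d.toProd.2) : O.Reaches u v := by
  induction w with
  | nil => exact Relation.ReflTransGen.refl
  | cons h p ih =>
    refine Relation.ReflTransGen.head (hd ⟨(_, _), h⟩ List.mem_cons_self) (ih ?_)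
    intro d hdm; exact hd d (by simp [hdm])

lemma reaches_start_of_mem_support (O : GraphOrientation G) {u v : V} (w : G.Walk u v)
    (hd : ∀ d ∈ w.darts, O.dir d.toProd.1 d.toProd.2) {x : V} (hx : x ∈ w.support) :
    O.Reaches u x := by
  induction w with
  | nil => simp at hx; subst hx; exact Relation.ReflTransGen.refl
  | cons h p ih =>
    rw [SimpleGraph.Walk.support_cons, List.mem_cons] at hx
    rcases hx with rfl | hx
    · exact Relation.ReflTransGen.refl
    · exact Relation.ReflTransGen.head (hd ⟨(_, _), h⟩ List.mem_cons_self)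
        (ih (fun d hdm => hd d (by simp [hdm])) hx)

lemma reaches_end_of_mem_support (O : GraphOrientation G) {u v : V} (w : G.Walk u v)
    (hd : ∀ d ∈ w.darts, O.dir d.toProd.1 d.toProd.2) {x : V} (hx : x ∈ w.support) :
    O.Reaches x v := by
  induction w with
  | nil => simp at hx; subst hx; exact Relation.ReflTransGen.refl
  | cons h p ih =>
    rw [SimpleGraph.Walk.support_cons, List.mem_cons] at hx
    rcases hx with rfl | hx
    · exact Relation.ReflTransGen.head (hd ⟨(_, _), h⟩ List.mem_cons_self)
        (reaches_of_dirWalk O p (fun d hdm => hd d (by simp [hdm])))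
    · exact ih (fun d hdm => hd d (by simp [hdm])) hx

lemma closed_reaches (O : GraphOrientation G) {v : V} (w : G.Walk v v)
    (hd : ∀ d ∈ w.darts, O.dir d.toProd.1 d.toProd.2) {x y : V}
    (hx : x ∈ w.support) (hy : y ∈ w.support) : O.Reaches x y :=
  (reaches_end_of_mem_support O w hd hx).trans (reaches_start_of_mem_support O w hd hy)

lemma reaches_mono (O O' : GraphOrientation G)
    (h : ∀ x y, O.dir x y → O'.Reaches x y) {u v : V} (huv : O.Reaches u v) :
    O'.Reaches u v := by
  induction huv with
  | refl => exact Relation.ReflTransGen.refl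
  | tail _ hstep ih => exact ih.trans (h _ _ hstep)

lemma exists_dirWalk (O : GraphOrientation G) {u v : V} (h : O.Reaches u v) :
    ∃ w : G.Walk u v, ∀ d ∈ w.darts, O.dir d.toProd.1 d.toProd.2 := by
  induction h with
  | refl => exact ⟨SimpleGraph.Walk.nil, by simp⟩
  | tail _ hstep ih =>
    obtain ⟨w, hw⟩ := ih
    refine ⟨w.concat (O.adj_of_dir _ _ hstep), ?_⟩
    intro d hdm
    rw [SimpleGraph.Walk.darts_concat, List.concat_eq_append, List.mem_append] at hdm
    rcases hdm with hdm | hdm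
    · exact hw d hdm
    · simp at hdm; subst hdm; exact hstep

end GraphOrientation

namespace GraphOrientation
variable {V : Type*} {G : SimpleGraph V}

lemma not_dart_fst_end {u v : V} (p : G.Walk u v) (hp : p.IsPath) :
    ∀ d ∈ p.darts, d.toProd.1 = v → False := by
  induction p with
  | nil => simp
  | @cons a b c h q ih =>
    intro d hd hfst
    rw [SimpleGraph.Walk.darts_cons, List.mem_cons] at hd
    rw [SimpleGraph.Walk.cons_isPath_iff] at hp
    rcases hd with rfl | hd
    · simp only at hfst
      subst hfst
      exact hp.2 q.end_mem_support
    · exact ih hp.1 d hd hfst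

/-- `e` lies in the cyclic part of `O`. -/
def InCyc (O : GraphOrientation G) (e : Sym2 V) : Prop :=
  ∃ a b, e = s(a, b) ∧ O.dir a b ∧ O.Reaches b a

lemma inCyc_iff [DecidableEq V] (O : GraphOrientation G) (e : Sym2 V) :
    O.InCyc e ↔ ∃ C : Set (Sym2 V), O.IsDirCycle C ∧ e ∈ C := by
  constructor
  · rintro ⟨a, b, rfl, hab, hba⟩
    obtain ⟨w, hw⟩ := exists_dirWalk O hba
    have hadj : G.Adj a b := O.adj_of_dir _ _ hab
    have hpd : ∀ d ∈ w.bypass.darts, O.dir d.toProd.1 d.toProd.2 :=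
      fun d hd => hw d (w.darts_bypass_subset hd)
    have hne : s(a, b) ∉ w.bypass.edges := by
      intro he
      obtain ⟨d, hd, hde⟩ := List.mem_map.mp he
      rw [SimpleGraph.dart_edge_eq_mk'_iff'] at hde
      rcases hde with ⟨h1, h2⟩ | ⟨h1, h2⟩
      · exact not_dart_fst_end w.bypass w.bypass_isPath d hd h1
      · have hdir : O.dir b a := by
          have := hpd d hd; rwa [h1, h2] at this
        exact ((O.dir_iff_not a b hadj).mp hab) hdir
    refine ⟨_, ⟨a, SimpleGraph.Walk.cons hadj w.bypass,
      (SimpleGraph.Walk.cons_isCycle_iff _ _).mpr ⟨w.bypass_isPath, hne⟩, ?_, rfl⟩, ?_⟩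
    · intro d hd
      rw [SimpleGraph.Walk.darts_cons, List.mem_cons] at hd
      rcases hd with rfl | hd
      · exact hab
      · exact hpd d hd
    · show s(a, b) ∈ _
      simp [SimpleGraph.Walk.edges_cons]
  · rintro ⟨C, ⟨v, w, hc, hd, rfl⟩, he⟩
    obtain ⟨d, hdm, hde⟩ := List.mem_map.mp he
    refine ⟨d.toProd.1, d.toProd.2, ?_, hd d hdm, ?_⟩
    · rw [← hde]; rfl
    · exact closed_reaches O w hd
        (SimpleGraph.Walk.dart_snd_mem_support_of_mem_darts _ hdm)
        (SimpleGraph.Walk.dart_fst_mem_support_of_mem_darts _ hdm)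

/-- A closed directed walk with edge set `A`. -/
def DirClosed (O : GraphOrientation G) (A : Set (Sym2 V)) : Prop :=
  ∃ (v : V) (w : G.Walk v v), (∀ d ∈ w.darts, O.dir d.toProd.1 d.toProd.2) ∧
    A = {e | e ∈ w.edges}

/-- A cut all of whose edges are directed into `U`. -/
def DirCut (O : GraphOrientation G) (A : Set (Sym2 V)) : Prop :=
  ∃ U : Set V, A = G.cutSet U ∧ ∀ a b, O.dir a b → s(a, b) ∈ A → b ∈ U

lemma exists_cross {U : Set V} : ∀ {u v : V} (p : G.Walk u v), u ∈ U → v ∉ U →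
    ∃ d ∈ p.darts, d.toProd.1 ∈ U ∧ d.toProd.2 ∉ U := by
  intro u v p
  induction p with
  | nil => intro h1 h2; exact absurd h1 h2
  | @cons a b c h q ih =>
    intro h1 h2
    by_cases hb : b ∈ U
    · obtain ⟨d, hd, hcross⟩ := ih hb h2
      exact ⟨d, by simp [hd], hcross⟩
    · exact ⟨⟨(a, b), h⟩, by simp, h1, hb⟩

lemma dirCut_disjoint [DecidableEq V] (O : GraphOrientation G) {A : Set (Sym2 V)} (hA : O.DirCut A)
    {v : V} (w : G.Walk v v) (hd : ∀ d ∈ w.darts, O.dir d.toProd.1 d.toProd.2) :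
    ∀ e ∈ w.edges, e ∉ A := by
  obtain ⟨U, hAU, hdir⟩ := hA
  intro e hew heA
  obtain ⟨d0, hd0m, hd0e⟩ := List.mem_map.mp hew
  -- d0 is directed, its edge is in A = cutSet U, so its head is in U, tail not in U
  have hdird0 : O.dir d0.toProd.1 d0.toProd.2 := hd d0 hd0m
  have heAd : s(d0.toProd.1, d0.toProd.2) ∈ A := by rw [← hd0e] at heA; exact heA
  have hhead : d0.toProd.2 ∈ U := hdir _ _ hdird0 heAd
  have htail : d0.toProd.1 ∉ U := by
    rw [hAU] at heAd
    obtain ⟨x, y, hxy, _, hxU, hyU⟩ := heAd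
    rw [Sym2.eq_iff] at hxy
    rcases hxy with ⟨rfl, rfl⟩ | ⟨rfl, rfl⟩
    · exact absurd hhead hyU
    · exact hyU
  -- rotate the walk to start at the head
  have hb' : d0.toProd.2 ∈ w.support := SimpleGraph.Walk.dart_snd_mem_support_of_mem_darts _ hd0m
  set w' := w.rotate _ hb' with hw'
  have hperm : w'.darts ~r w.darts := w.rotate_darts _ hb'
  have hd0' : d0 ∈ w'.darts := hperm.perm.mem_iff.mpr hd0m
  have ha' : d0.toProd.1 ∈ w'.support := SimpleGraph.Walk.dart_fst_mem_support_of_mem_darts _ hd0'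
  -- take the walk from the head until it reaches the tail; it must cross out of U
  obtain ⟨d, hdm, hdU, hdU2⟩ := exists_cross (w'.takeUntil _ ha') hhead htail
  have hdmw : d ∈ w.darts := hperm.perm.mem_iff.mp (w'.darts_takeUntil_subset ha' hdm)
  -- but that crossing dart is directed out of U, contradicting the cut direction
  have : d.toProd.2 ∈ U := by
    apply hdir _ _ (hd d hdmw)
    rw [hAU]
    exact ⟨d.toProd.1, d.toProd.2, rfl, d.adj, hdU, hdU2⟩
  exact hdU2 this

end GraphOrientation

namespace GraphOrientation
variable {V : Type*} {G : SimpleGraph V}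

lemma flip_symm {O O' : GraphOrientation G} {A : Set (Sym2 V)} (hflip : O.IsFlipOn O' A) :
    O'.IsFlipOn O A := by
  constructor
  · intro u v huv
    have := hflip.1 v u (by rwa [Sym2.eq_swap])
    exact this.symm
  · intro u v huv
    exact (hflip.2 u v huv).symm

lemma dirClosed_flip {O O' : GraphOrientation G} {A : Set (Sym2 V)}
    (hA : O.DirClosed A) (hflip : O.IsFlipOn O' A) : O'.DirClosed A := by
  obtain ⟨v, w, hd, hE⟩ := hA
  refine ⟨v, w.reverse, ?_, ?_⟩
  · intro d hdm
    rw [SimpleGraph.Walk.darts_reverse, List.mem_reverse, List.mem_map] at hdm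
    obtain ⟨d', hd'm, rfl⟩ := hdm
    have hmem : s(d'.toProd.1, d'.toProd.2) ∈ A := by
      rw [hE]
      exact List.mem_map.mpr ⟨d', hd'm, rfl⟩
    have hmem' : s(d'.toProd.2, d'.toProd.1) ∈ A := by rwa [Sym2.eq_swap]
    exact (hflip.1 _ _ hmem').mpr (hd d' hd'm)
  · rw [hE]
    ext e
    simp [SimpleGraph.Walk.edges_reverse, List.mem_reverse]

lemma dirCut_flip {O O' : GraphOrientation G} {A : Set (Sym2 V)}
    (hA : O.DirCut A) (hflip : O.IsFlipOn O' A) : O'.DirCut A := by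
  obtain ⟨U, hAU, hdir⟩ := hA
  refine ⟨Uᶜ, ?_, ?_⟩
  · rw [hAU]
    ext e
    constructor
    · rintro ⟨a, b, rfl, hadj, haU, hbU⟩
      exact ⟨b, a, Sym2.eq_swap.symm, hadj.symm, hbU, by simp [haU]⟩
    · rintro ⟨a, b, rfl, hadj, haU, hbU⟩
      have hbU' : b ∈ U := by simpa using hbU
      exact ⟨b, a, Sym2.eq_swap.symm, hadj.symm, hbU', haU⟩
  · intro a b hab hmem
    have hOba : O.dir b a := (hflip.1 a b hmem).mp hab
    have haU : a ∈ U := hdir b a hOba (by rwa [Sym2.eq_swap])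
    -- a ∈ U and edge in cutSet U forces b ∉ U
    have : s(a, b) ∈ G.cutSet U := by rwa [hAU] at hmem
    obtain ⟨x, y, hxy, _, hxU, hyU⟩ := this
    rw [Sym2.eq_iff] at hxy
    rcases hxy with ⟨rfl, rfl⟩ | ⟨rfl, rfl⟩
    · exact hyU
    · exact absurd haU hyU

lemma key [DecidableEq V] {O O' : GraphOrientation G} {A : Set (Sym2 V)}
    (hA : O.DirClosed A ∨ O.DirCut A) (hflip : O.IsFlipOn O' A) {e : Sym2 V}
    (he : O.InCyc e) : O'.InCyc e := by
  rcases hA with hcl | hcut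
  · -- cycle flip: simulate each step
    obtain ⟨v, w, hd, hE⟩ := hcl
    have hrev : ∀ d ∈ w.reverse.darts, O'.dir d.toProd.1 d.toProd.2 := by
      obtain ⟨v', w', hd', hE'⟩ := dirClosed_flip ⟨v, w, hd, hE⟩ hflip
      intro d hdm
      -- redo directly instead
      rw [SimpleGraph.Walk.darts_reverse, List.mem_reverse, List.mem_map] at hdm
      obtain ⟨d', hd'm, rfl⟩ := hdm
      have hmem : s(d'.toProd.2, d'.toProd.1) ∈ A := by
        rw [Sym2.eq_swap, hE]
        exact List.mem_map.mpr ⟨d', hd'm, rfl⟩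
      exact (hflip.1 _ _ hmem).mpr (hd d' hd'm)
    have step : ∀ x y, O.dir x y → O'.Reaches x y := by
      intro x y hxy
      by_cases hm : s(x, y) ∈ A
      · have hxs : x ∈ w.support := by
          rw [hE] at hm
          exact w.fst_mem_support_of_mem_edges hm
        have hys : y ∈ w.support := by
          rw [hE] at hm
          exact w.snd_mem_support_of_mem_edges hm
        refine closed_reaches O' w.reverse hrev ?_ ?_ <;>
          rw [SimpleGraph.Walk.support_reverse, List.mem_reverse] <;> assumption
      · exact Relation.ReflTransGen.single ((hflip.2 x y hm).mpr hxy)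
    obtain ⟨a, b, rfl, hab, hba⟩ := he
    by_cases hm : s(a, b) ∈ A
    · refine ⟨b, a, Sym2.eq_swap.symm, ?_, step a b hab⟩
      exact (hflip.1 b a (by rwa [Sym2.eq_swap])).mpr hab
    · exact ⟨a, b, rfl, (hflip.2 a b hm).mpr hab, reaches_mono O O' step hba⟩
  · -- cocycle flip: a directed cycle avoids the directed cut entirely
    obtain ⟨C, ⟨v, w, hc, hd, hE⟩, heC⟩ := (inCyc_iff O e).mp he
    have hdisj := dirCut_disjoint O hcut w hd
    have hd' : ∀ d ∈ w.darts, O'.dir d.toProd.1 d.toProd.2 := by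
      intro d hdm
      have : (s(d.toProd.1, d.toProd.2) : Sym2 V) ∉ A :=
        hdisj _ (List.mem_map.mpr ⟨d, hdm, rfl⟩)
      exact (hflip.2 _ _ this).mpr (hd d hdm)
    exact (inCyc_iff O' e).mpr ⟨C, ⟨v, w, hc, hd', hE⟩, heC⟩

end GraphOrientation

theorem statement11 {V : Type*} [Fintype V] (G : SimpleGraph V)
    (O O' : GraphOrientation G) (A : Set (Sym2 V))
    (hA : O.IsDirCycle A ∨ O.IsDirCocycle A) (hflip : O.IsFlipOn O' A) :
    ∀ e : Sym2 V, (∃ C : Set (Sym2 V), O.IsDirCycle C ∧ e ∈ C) ↔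
      (∃ C : Set (Sym2 V), O'.IsDirCycle C ∧ e ∈ C) := by
  classical
  intro e
  have h1 : O.DirClosed A ∨ O.DirCut A := by
    rcases hA with ⟨v, w, _, hd, hE⟩ | ⟨_, U, hU, hdir⟩
    · exact Or.inl ⟨v, w, hd, hE⟩
    · exact Or.inr ⟨U, hU, hdir⟩
  have hflip' := GraphOrientation.flip_symm hflip
  have h2 : O'.DirClosed A ∨ O'.DirCut A :=
    h1.imp (GraphOrientation.dirClosed_flip · hflip) (GraphOrientation.dirCut_flip · hflip)
  rw [← GraphOrientation.inCyc_iff, ← GraphOrientation.inCyc_iff]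
  exact ⟨GraphOrientation.key h1 hflip, GraphOrientation.key h2 hflip'⟩
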